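/- Let T(k) = {(x,y) ∈ ℕ₀×ℕ₀ : min(x,y) ≤ max(x,y) < k − 2·min(x,y)} (as a set of ordered pairs, symmetric in x and y). For m ∈ ℕ₀: if k = 3m+1 then #T(k) = 3(m+1)² − 2(m+1); if k = 3m+2 then #T(k) = 3(m+1)²; if k = 3(m+1) then #T(k) = 3(m+1)² + 2(m+1). -/

import Mathlib

/-- The set of terminal positions of Blocking-k Wythoff Nim, as ordered pairs:
max(x,y) < k − 2·min(x,y). -/
def terminalSet (k : ℕ) : Set (ℕ × ℕ) :=
  {p | (max p.1 p.2 : ℤ) < (k : ℤ) - 2 * min p.1 p.2}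

open Finset

private def TF (k : ℕ) : Finset (ℕ × ℕ) :=
  (range k ×ˢ range k).filter (fun p => max p.1 p.2 + 2 * min p.1 p.2 < k)

private lemma terminalSet_eq_TF (k : ℕ) : terminalSet k = ↑(TF k) := by
  ext ⟨x, y⟩
  simp only [terminalSet, TF, Set.mem_setOf_eq, coe_filter, mem_product, mem_range,
    Set.mem_setOf_eq]
  rcases le_total x y with h | h
  · rw [max_eq_right h, min_eq_left h]
    constructor
    · intro h'
      refine ⟨⟨?_, ?_⟩, ?_⟩ <;> omega
    · rintro ⟨⟨-, -⟩, h'⟩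
      omega
  · rw [max_eq_left h, min_eq_right h]
    constructor
    · intro h'
      refine ⟨⟨?_, ?_⟩, ?_⟩ <;> omega
    · rintro ⟨⟨-, -⟩, h'⟩
      omega

private lemma fiber_eq (k t : ℕ) :
    (TF k).filter (fun p => min p.1 p.2 = t) =
      ((Ico t (k - 2 * t)).image (fun y => (t, y))) ∪
      ((Ico (t + 1) (k - 2 * t)).image (fun x => (x, t))) := by
  ext ⟨x, y⟩
  simp only [TF, filter_filter, mem_filter, mem_product, mem_range, mem_union, mem_image,
    mem_Ico, Prod.mk.injEq]
  constructor
  · rintro ⟨⟨hx, hy⟩, hlt, hmin⟩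
    rcases le_total x y with h | h
    · exact Or.inl ⟨y, ⟨by omega, by omega⟩, by omega, by omega⟩
    · by_cases hxy : x = y
      · exact Or.inl ⟨y, ⟨by omega, by omega⟩, by omega, by omega⟩
      · exact Or.inr ⟨x, ⟨by omega, by omega⟩, by omega, by omega⟩
  · rintro (⟨a, ha, h1, h2⟩ | ⟨a, ha, h1, h2⟩) <;> subst h1 <;> subst h2 <;>
      refine ⟨⟨?_, ?_⟩, ?_, ?_⟩ <;> omega

private lemma fiber_card (k t : ℕ) :
    ((TF k).filter (fun p => min p.1 p.2 = t)).card = (k - 3 * t) + (k - (3 * t + 1)) := by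
  rw [fiber_eq]
  rw [card_union_of_disjoint]
  · rw [card_image_of_injective _ (fun a b h => by simpa using h),
      card_image_of_injective _ (fun a b h => by simpa using h),
      Nat.card_Ico, Nat.card_Ico]
    omega
  · rw [disjoint_left]
    rintro ⟨x, y⟩ hx hy
    simp only [mem_image, mem_Ico, Prod.mk.injEq] at hx hy
    obtain ⟨a, ha, h1, h2⟩ := hx
    obtain ⟨b, hb, h3, h4⟩ := hy
    omega

private lemma TF_card (k : ℕ) :
    (TF k).card = ∑ t ∈ range k, ((k - 3 * t) + (k - (3 * t + 1))) := by
  rw [card_eq_sum_card_fiberwise (f := fun p => min p.1 p.2) (t := range k)]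
  · exact Finset.sum_congr rfl fun t _ => fiber_card k t
  · rintro ⟨x, y⟩ hp
    simp only [TF, mem_filter, mem_product, mem_range, mem_coe] at hp ⊢
    omega

private lemma sum_trunc (k n : ℕ) (h : n ≤ k) (h3 : k ≤ 3 * n) :
    ∑ t ∈ range k, ((k - 3 * t) + (k - (3 * t + 1))) =
    ∑ t ∈ range n, ((k - 3 * t) + (k - (3 * t + 1))) := by
  symm
  apply Finset.sum_subset
  · exact Finset.range_subset_range.2 h
  · intro t _ ht
    simp only [mem_range, not_lt] at ht
    omega

private lemma revsum (c : ℕ) (m : ℕ) :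
    ∑ t ∈ range (m + 1), (6 * (m - t) + c) + 3 * (m + 1) =
      3 * (m + 1) ^ 2 + c * (m + 1) := by
  induction m with
  | zero => simp; ring
  | succ m ih =>
    rw [Finset.sum_range_succ']
    simp only [Nat.add_sub_add_right, Nat.sub_zero]
    have h : (m + 1 + 1) ^ 2 = (m + 1) ^ 2 + 2 * m + 3 := by ring
    have h2 : c * (m + 1 + 1) = c * (m + 1) + c := by ring
    omega

/-- Counting the terminal positions of Blocking-k Wythoff Nim. -/
theorem terminalSet_card (m : ℕ) :
    (terminalSet (3 * m + 1)).ncard = 3 * (m + 1) ^ 2 - 2 * (m + 1) ∧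
    (terminalSet (3 * m + 2)).ncard = 3 * (m + 1) ^ 2 ∧
    (terminalSet (3 * (m + 1))).ncard = 3 * (m + 1) ^ 2 + 2 * (m + 1) := by
  have key : ∀ k : ℕ, (terminalSet k).ncard = (TF k).card := fun k => by
    rw [terminalSet_eq_TF, Set.ncard_coe_finset]
  refine ⟨?_, ?_, ?_⟩
  · rw [key, TF_card, sum_trunc _ (m + 1) (by omega) (by omega)]
    have e1 : ∑ t ∈ range (m + 1), ((3 * m + 1 - 3 * t) + (3 * m + 1 - (3 * t + 1))) =
        ∑ t ∈ range (m + 1), (6 * (m - t) + 1) :=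
      Finset.sum_congr rfl fun t ht => by simp only [mem_range] at ht; omega
    rw [e1]
    have h := revsum 1 m
    have h2 : (m + 1) ^ 2 = m ^ 2 + 2 * m + 1 := by ring
    omega
  · rw [key, TF_card, sum_trunc _ (m + 1) (by omega) (by omega)]
    have e1 : ∑ t ∈ range (m + 1), ((3 * m + 2 - 3 * t) + (3 * m + 2 - (3 * t + 1))) =
        ∑ t ∈ range (m + 1), (6 * (m - t) + 3) :=
      Finset.sum_congr rfl fun t ht => by simp only [mem_range] at ht; omega
    rw [e1]
    have h := revsum 3 m
    have h2 : (m + 1) ^ 2 = m ^ 2 + 2 * m + 1 := by ring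
    omega
  · rw [key, TF_card, sum_trunc _ (m + 1) (by omega) (by omega)]
    have e1 : ∑ t ∈ range (m + 1), ((3 * (m + 1) - 3 * t) + (3 * (m + 1) - (3 * t + 1))) =
        ∑ t ∈ range (m + 1), (6 * (m - t) + 5) :=
      Finset.sum_congr rfl fun t ht => by simp only [mem_range] at ht; omega
    rw [e1]
    have h := revsum 5 m
    have h2 : (m + 1) ^ 2 = m ^ 2 + 2 * m + 1 := by ring
    omega
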